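/- For the treated group, E[D·Y(1)] = P(D=1)·E[Y(1)|D=1], and under unconfoundedness E[(1-D)·Y(0)·π(X)/(1-π(X))] = E[π(X)·Y(0)] = P(D=1)·E[Y(0)|D=1]. -/

import Mathlib

open MeasureTheory ProbabilityTheory

section Aux

variable {Ω : Type*} [mΩ : MeasurableSpace Ω] [StandardBorelSpace Ω]

/-- Key identity: if `Y0` and binary `D` are conditionally independent given `m`, then
`∫_s D·Y0 = ∫_s (μ[D|m])·Y0` for every `m`-measurable set `s`. -/
lemma att_crux_setIntegral (μ : Measure Ω) [IsProbabilityMeasure μ]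
    {m : MeasurableSpace Ω} (hm : m ≤ mΩ)
    {D Y0 : Ω → ℝ} (hD : Measurable[mΩ] D) (hY0 : Measurable[mΩ] Y0)
    (hDbin : ∀ ω, D ω = 0 ∨ D ω = 1)
    (hY0int : Integrable Y0 μ)
    (hunconf : CondIndepFun m hm Y0 D μ)
    {s : Set Ω} (hs : MeasurableSet[m] s) :
    ∫ ω in s, D ω * Y0 ω ∂μ = ∫ ω in s, (μ[D|m]) ω * Y0 ω ∂μ := by
  letI _inst : MeasurableSpace Ω := mΩ
  have hDnorm : ∀ ω, ‖D ω‖ ≤ 1 := fun ω => by rcases hDbin ω with h | h <;> simp [h]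
  have hDint : Integrable D μ :=
    Integrable.mono' (integrable_const 1) (hD.aestronglyMeasurable : AEStronglyMeasurable D μ) (Filter.Eventually.of_forall hDnorm)
  have hp0 : 0 ≤ᵐ[μ] μ[D|m] :=
    condExp_nonneg (Filter.Eventually.of_forall fun ω => by rcases hDbin ω with h | h <;> simp [h])
  have hp1 : μ[D|m] ≤ᵐ[μ] fun _ => (1 : ℝ) := by
    have h := condExp_mono (μ := μ) (m := m) hDint (integrable_const (1 : ℝ))
      (Filter.Eventually.of_forall fun ω => by rcases hDbin ω with h | h <;> simp [h])
    rwa [condExp_const hm (1 : ℝ)] at h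
  have hpnorm : ∀ᵐ ω ∂μ, ‖(μ[D|m]) ω‖ ≤ 1 := by
    filter_upwards [hp0, hp1] with ω h0 h1
    simp only [Pi.zero_apply] at h0
    rw [Real.norm_eq_abs, abs_le]
    exact ⟨by linarith, h1⟩
  have hpaesm : AEStronglyMeasurable (μ[D|m]) μ :=
    (stronglyMeasurable_condExp.mono hm).aestronglyMeasurable
  have hmY : MeasurableSpace.comap Y0 inferInstance ≤ mΩ := hY0.comap_le
  have hY0mY : Measurable[MeasurableSpace.comap Y0 inferInstance] Y0 := fun t ht => ⟨t, ht, rfl⟩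
  have hY0trim : Integrable Y0 (μ.trim hmY) := hY0int.trim hmY hY0mY.stronglyMeasurable
  have key : ∀ ⦃f : Ω → ℝ⦄, Integrable f (μ.trim hmY) →
      ∫ ω in s, D ω * f ω ∂μ = ∫ ω in s, (μ[D|m]) ω * f ω ∂μ := by
    refine @Integrable.induction Ω ℝ (MeasurableSpace.comap Y0 inferInstance) _ (μ.trim hmY)
      (fun f => ∫ ω in s, D ω * f ω ∂μ = ∫ ω in s, (μ[D|m]) ω * f ω ∂μ) ?_ ?_ ?_ ?_
    · -- indicators
      rintro c u ⟨v, hv, rfl⟩ -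
      have hA : MeasurableSet[mΩ] (D ⁻¹' {1}) := hD (measurableSet_singleton 1)
      have hu' : MeasurableSet[mΩ] (Y0 ⁻¹' v) := hY0 hv
      have hind_int : Integrable ((Y0 ⁻¹' v ∩ D ⁻¹' {1}).indicator fun _ => (1 : ℝ)) μ :=
        (integrable_const 1).indicator (hu'.inter hA)
      have hind_int' : Integrable ((Y0 ⁻¹' v).indicator fun _ => (1 : ℝ)) μ :=
        (integrable_const 1).indicator hu'
      have hpu_int : Integrable
          ((μ[D|m]) * ((Y0 ⁻¹' v).indicator fun _ => (1 : ℝ))) μ :=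
        hind_int'.bdd_mul hpaesm hpnorm
      have hDind : (D ⁻¹' {1}).indicator (fun _ => (1 : ℝ)) = D := by
        funext ω
        rcases hDbin ω with h | h <;> simp [Set.indicator_apply, Set.mem_preimage, h]
      have hCI := (condIndepFun_iff_condExp_inter_preimage_eq_mul hY0 hD).mp hunconf
        v {1} hv (measurableSet_singleton 1)
      rw [hDind] at hCI
      have hpull := condExp_mul_of_stronglyMeasurable_left (m := m) (μ := μ)
        stronglyMeasurable_condExp hpu_int hind_int'
      have hL : ∫ ω in s, D ω * (Y0 ⁻¹' v).indicator (fun _ => c) ω ∂μ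
          = c * ∫ ω in s, ((Y0 ⁻¹' v ∩ D ⁻¹' {1}).indicator fun _ => (1 : ℝ)) ω ∂μ := by
        rw [← integral_const_mul]
        refine integral_congr_ae (Filter.Eventually.of_forall fun ω => ?_)
        rcases hDbin ω with h | h
        · have hnm : ω ∉ Y0 ⁻¹' v ∩ D ⁻¹' {1} := by
            rintro ⟨-, h2⟩
            rw [Set.mem_preimage, Set.mem_singleton_iff, h] at h2
            norm_num at h2
          simp [Set.indicator_apply, h, hnm]
        · by_cases hv' : ω ∈ Y0 ⁻¹' v
          · have hmem : ω ∈ Y0 ⁻¹' v ∩ D ⁻¹' {1} := ⟨hv', by simp [Set.mem_preimage, h]⟩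
            simp [Set.indicator_apply, h, hv', hmem, mul_comm]
          · have hnm : ω ∉ Y0 ⁻¹' v ∩ D ⁻¹' {1} := fun hmem => hv' hmem.1
            simp [Set.indicator_apply, h, hv', hnm]
      have hR : ∫ ω in s, (μ[D|m]) ω * (Y0 ⁻¹' v).indicator (fun _ => c) ω ∂μ
          = c * ∫ ω in s, ((μ[D|m]) * ((Y0 ⁻¹' v).indicator fun _ => (1 : ℝ))) ω ∂μ := by
        rw [← integral_const_mul]
        refine integral_congr_ae (Filter.Eventually.of_forall fun ω => ?_)
        by_cases hv' : ω ∈ Y0 ⁻¹' v <;> simp [Set.indicator_apply, hv'] <;> ring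
      rw [hL, hR]
      congr 1
      calc ∫ ω in s, ((Y0 ⁻¹' v ∩ D ⁻¹' {1}).indicator fun _ => (1 : ℝ)) ω ∂μ
          = ∫ ω in s, (μ⟦Y0 ⁻¹' v ∩ D ⁻¹' {1}|m⟧) ω ∂μ :=
            (setIntegral_condExp hm hind_int hs).symm
        _ = ∫ ω in s, (μ⟦Y0 ⁻¹' v|m⟧) ω * (μ[D|m]) ω ∂μ :=
            integral_congr_ae (ae_restrict_of_ae hCI)
        _ = ∫ ω in s, ((μ[D|m]) * μ⟦Y0 ⁻¹' v|m⟧) ω ∂μ := by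
            refine integral_congr_ae (Filter.Eventually.of_forall fun ω => ?_)
            simp [mul_comm]
        _ = ∫ ω in s, (μ[(μ[D|m]) * ((Y0 ⁻¹' v).indicator fun _ => (1 : ℝ))|m]) ω ∂μ :=
            integral_congr_ae (ae_restrict_of_ae hpull.symm)
        _ = ∫ ω in s, ((μ[D|m]) * ((Y0 ⁻¹' v).indicator fun _ => (1 : ℝ))) ω ∂μ :=
            setIntegral_condExp hm hpu_int hs
    · -- additivity
      intro f g _ hf hg hPf hPg
      have hfμ : Integrable f μ := integrable_of_integrable_trim hmY hf
      have hgμ : Integrable g μ := integrable_of_integrable_trim hmY hg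
      have hDf : Integrable (fun ω => D ω * f ω) μ :=
        hfμ.bdd_mul hD.aestronglyMeasurable (Filter.Eventually.of_forall hDnorm)
      have hDg : Integrable (fun ω => D ω * g ω) μ :=
        hgμ.bdd_mul hD.aestronglyMeasurable (Filter.Eventually.of_forall hDnorm)
      have hpf : Integrable (fun ω => (μ[D|m]) ω * f ω) μ := hfμ.bdd_mul hpaesm hpnorm
      have hpg : Integrable (fun ω => (μ[D|m]) ω * g ω) μ := hgμ.bdd_mul hpaesm hpnorm
      simp only [Pi.add_apply, mul_add]
      rw [integral_add hDf.integrableOn hDg.integrableOn,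
        integral_add hpf.integrableOn hpg.integrableOn, hPf, hPg]
    · -- closedness
      have hG1 : LipschitzWith 1 fun f : Ω →₁[μ.trim hmY] ℝ => ∫ ω in s, D ω * f ω ∂μ := by
        refine LipschitzWith.of_dist_le_mul fun f g => ?_
        have hfi : Integrable (⇑f) μ := integrable_of_integrable_trim hmY (L1.integrable_coeFn f)
        have hgi : Integrable (⇑g) μ := integrable_of_integrable_trim hmY (L1.integrable_coeFn g)
        have hDf : Integrable (fun ω => D ω * f ω) μ :=
          hfi.bdd_mul hD.aestronglyMeasurable (Filter.Eventually.of_forall hDnorm)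
        have hDg : Integrable (fun ω => D ω * g ω) μ :=
          hgi.bdd_mul hD.aestronglyMeasurable (Filter.Eventually.of_forall hDnorm)
        have hsub : Integrable (fun ω => f ω - g ω) μ := hfi.sub hgi
        have hDsub : Integrable (fun ω => D ω * (f ω - g ω)) μ :=
          (hDf.sub hDg).congr (Filter.Eventually.of_forall fun ω => by
            simp only [Pi.sub_apply]; ring)
        rw [Real.dist_eq, NNReal.coe_one, one_mul, ← integral_sub hDf.integrableOn hDg.integrableOn]
        have h1 : ∫ ω in s, (D ω * f ω - D ω * g ω) ∂μ = ∫ ω in s, D ω * (f ω - g ω) ∂μ := by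
          refine integral_congr_ae (Filter.Eventually.of_forall fun ω => ?_); ring
        rw [h1, ← Real.norm_eq_abs]
        calc ‖∫ ω in s, D ω * (f ω - g ω) ∂μ‖
            ≤ ∫ ω in s, ‖D ω * (f ω - g ω)‖ ∂μ := norm_integral_le_integral_norm _
          _ ≤ ∫ ω in s, ‖f ω - g ω‖ ∂μ := by
              refine integral_mono_ae hDsub.norm.integrableOn hsub.norm.integrableOn
                (ae_restrict_of_ae (Filter.Eventually.of_forall fun ω => ?_))
              · calc ‖D ω * (f ω - g ω)‖ = ‖D ω‖ * ‖f ω - g ω‖ := norm_mul _ _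
                  _ ≤ 1 * ‖f ω - g ω‖ := by
                      exact mul_le_mul_of_nonneg_right (hDnorm ω) (norm_nonneg _)
                  _ = ‖f ω - g ω‖ := one_mul _
          _ ≤ ∫ ω, ‖f ω - g ω‖ ∂μ :=
              setIntegral_le_integral hsub.norm
                (Filter.Eventually.of_forall fun ω => norm_nonneg _)
          _ = ∫ ω, ‖f ω - g ω‖ ∂(μ.trim hmY) :=
              integral_trim_ae hmY
                ((Lp.aestronglyMeasurable f).sub (Lp.aestronglyMeasurable g)).norm
          _ = dist f g := by
              rw [L1.dist_eq_integral_dist]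
              exact integral_congr_ae (Filter.Eventually.of_forall fun ω => by
                simp [Real.dist_eq, Real.norm_eq_abs])
      have hG2 : LipschitzWith 1 fun f : Ω →₁[μ.trim hmY] ℝ => ∫ ω in s, (μ[D|m]) ω * f ω ∂μ := by
        refine LipschitzWith.of_dist_le_mul fun f g => ?_
        have hfi : Integrable (⇑f) μ := integrable_of_integrable_trim hmY (L1.integrable_coeFn f)
        have hgi : Integrable (⇑g) μ := integrable_of_integrable_trim hmY (L1.integrable_coeFn g)
        have hDf : Integrable (fun ω => (μ[D|m]) ω * f ω) μ := hfi.bdd_mul hpaesm hpnorm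
        have hDg : Integrable (fun ω => (μ[D|m]) ω * g ω) μ := hgi.bdd_mul hpaesm hpnorm
        have hsub : Integrable (fun ω => f ω - g ω) μ := hfi.sub hgi
        have hDsub : Integrable (fun ω => (μ[D|m]) ω * (f ω - g ω)) μ :=
          (hDf.sub hDg).congr (Filter.Eventually.of_forall fun ω => by
            simp only [Pi.sub_apply]; ring)
        rw [Real.dist_eq, NNReal.coe_one, one_mul, ← integral_sub hDf.integrableOn hDg.integrableOn]
        have h1 : ∫ ω in s, ((μ[D|m]) ω * f ω - (μ[D|m]) ω * g ω) ∂μ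
            = ∫ ω in s, (μ[D|m]) ω * (f ω - g ω) ∂μ := by
          refine integral_congr_ae (Filter.Eventually.of_forall fun ω => ?_); ring
        rw [h1, ← Real.norm_eq_abs]
        calc ‖∫ ω in s, (μ[D|m]) ω * (f ω - g ω) ∂μ‖
            ≤ ∫ ω in s, ‖(μ[D|m]) ω * (f ω - g ω)‖ ∂μ := norm_integral_le_integral_norm _
          _ ≤ ∫ ω in s, ‖f ω - g ω‖ ∂μ := by
              refine integral_mono_ae hDsub.norm.integrableOn hsub.norm.integrableOn
                (ae_restrict_of_ae ?_)
              filter_upwards [hpnorm] with ω hω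
              calc ‖(μ[D|m]) ω * (f ω - g ω)‖ = ‖(μ[D|m]) ω‖ * ‖f ω - g ω‖ := norm_mul _ _
                _ ≤ 1 * ‖f ω - g ω‖ := mul_le_mul_of_nonneg_right hω (norm_nonneg _)
                _ = ‖f ω - g ω‖ := one_mul _
          _ ≤ ∫ ω, ‖f ω - g ω‖ ∂μ :=
              setIntegral_le_integral hsub.norm
                (Filter.Eventually.of_forall fun ω => norm_nonneg _)
          _ = ∫ ω, ‖f ω - g ω‖ ∂(μ.trim hmY) :=
              integral_trim_ae hmY
                ((Lp.aestronglyMeasurable f).sub (Lp.aestronglyMeasurable g)).norm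
          _ = dist f g := by
              rw [L1.dist_eq_integral_dist]
              exact integral_congr_ae (Filter.Eventually.of_forall fun ω => by
                simp [Real.dist_eq, Real.norm_eq_abs])
      exact isClosed_eq hG1.continuous hG2.continuous
    · -- stability under a.e. equality
      intro f g hfg _ hPf
      have hfg' : f =ᵐ[μ] g := ae_eq_of_ae_eq_trim hfg
      have e1 : ∫ ω in s, D ω * f ω ∂μ = ∫ ω in s, D ω * g ω ∂μ :=
        integral_congr_ae (ae_restrict_of_ae (hfg'.mono fun ω h => by simp only [h]))
      have e2 : ∫ ω in s, (μ[D|m]) ω * f ω ∂μ = ∫ ω in s, (μ[D|m]) ω * g ω ∂μ :=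
        integral_congr_ae (ae_restrict_of_ae (hfg'.mono fun ω h => by simp only [h]))
      rw [← e1, ← e2]; exact hPf
  exact key hY0trim

lemma att_cond_integral (μ : Measure Ω) [IsProbabilityMeasure μ]
    {Y : Ω → ℝ} {A : Set Ω} (h0 : μ A ≠ 0) :
    (μ A).toReal * ∫ ω, Y ω ∂μ[|A] = ∫ ω in A, Y ω ∂μ := by
  rw [ProbabilityTheory.cond, integral_smul_measure, ENNReal.toReal_inv, smul_eq_mul,
    ← mul_assoc, mul_inv_cancel₀, one_mul]
  simp [ENNReal.toReal_ne_zero, h0, measure_ne_top]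

lemma att_parts23 (μ : Measure Ω) [IsProbabilityMeasure μ]
    {m : MeasurableSpace Ω} (hm : m ≤ mΩ)
    {D Y0 π : Ω → ℝ} (hD : Measurable[mΩ] D) (hY0 : Measurable[mΩ] Y0)
    (hDbin : ∀ ω, D ω = 0 ∨ D ω = 1) (hY0int : Integrable Y0 μ)
    (hπ : π =ᵐ[μ] μ[D|m])
    (hoverlap : ∀ᵐ ω ∂μ, 0 < π ω ∧ π ω < 1)
    (hunconf : CondIndepFun m hm Y0 D μ)
    (hint : Integrable (fun ω => (1 - D ω) * Y0 ω * π ω / (1 - π ω)) μ) :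
    (∫ ω, (1 - D ω) * Y0 ω * π ω / (1 - π ω) ∂μ = ∫ ω, π ω * Y0 ω ∂μ)
    ∧ (∫ ω, π ω * Y0 ω ∂μ = ∫ ω, D ω * Y0 ω ∂μ) := by
  letI _inst : MeasurableSpace Ω := mΩ
  have hDnorm : ∀ ω, ‖D ω‖ ≤ 1 := fun ω => by rcases hDbin ω with h | h <;> simp [h]
  have hp01 : ∀ᵐ ω ∂μ, 0 < (μ[D|m]) ω ∧ (μ[D|m]) ω < 1 := by
    filter_upwards [hπ, hoverlap] with ω h1 h2
    rw [← h1]; exact h2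
  have hpnorm : ∀ᵐ ω ∂μ, ‖(μ[D|m]) ω‖ ≤ 1 := by
    filter_upwards [hp01] with ω hω
    rw [Real.norm_eq_abs, abs_le]
    exact ⟨by linarith [hω.1], le_of_lt hω.2⟩
  have hpaesm : AEStronglyMeasurable (μ[D|m]) μ :=
    (stronglyMeasurable_condExp.mono hm).aestronglyMeasurable
  have hDY0int : Integrable (fun ω => D ω * Y0 ω) μ :=
    hY0int.bdd_mul (hD.aestronglyMeasurable : AEStronglyMeasurable D μ) (Filter.Eventually.of_forall hDnorm)
  have hpY0int : Integrable ((μ[D|m]) * Y0) μ := hY0int.bdd_mul hpaesm hpnorm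
  have crux : ∀ {s : Set Ω}, MeasurableSet[m] s →
      ∫ ω in s, D ω * Y0 ω ∂μ = ∫ ω in s, (μ[D|m]) ω * Y0 ω ∂μ := fun hs =>
    att_crux_setIntegral (mΩ := mΩ) μ hm hD hY0 hDbin hY0int hunconf hs
  have hπY0 : ∫ ω, π ω * Y0 ω ∂μ = ∫ ω, (μ[D|m]) ω * Y0 ω ∂μ := by
    refine integral_congr_ae ?_
    filter_upwards [hπ] with ω hω
    rw [hω]
  have part3 : ∫ ω, π ω * Y0 ω ∂μ = ∫ ω, D ω * Y0 ω ∂μ := by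
    have huniv := crux (MeasurableSet.univ (α := Ω))
    rw [Measure.restrict_univ] at huniv
    rw [hπY0, ← huniv]
  refine ⟨?_, part3⟩
  -- Part 2
  have hpull2 : μ[(μ[D|m]) * Y0|m] =ᵐ[μ] (μ[D|m]) * μ[Y0|m] :=
    condExp_mul_of_stronglyMeasurable_left stronglyMeasurable_condExp hpY0int hY0int
  have hkey : (fun ω => (μ[D|m]) ω * (μ[Y0|m]) ω) =ᵐ[μ] μ[fun ω => D ω * Y0 ω|m] := by
    refine ae_eq_condExp_of_forall_setIntegral_eq hm hDY0int
      (fun t ht hμt => ?_) (fun t ht hμt => ?_) ?_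
    · exact (integrable_condExp.bdd_mul hpaesm hpnorm).integrableOn
    · calc ∫ ω in t, (μ[D|m]) ω * (μ[Y0|m]) ω ∂μ
          = ∫ ω in t, (μ[(μ[D|m]) * Y0|m]) ω ∂μ := by
            refine integral_congr_ae (ae_restrict_of_ae ?_)
            filter_upwards [hpull2] with ω hω
            rw [hω]; rfl
        _ = ∫ ω in t, ((μ[D|m]) * Y0) ω ∂μ := setIntegral_condExp hm hpY0int ht
        _ = ∫ ω in t, D ω * Y0 ω ∂μ := (crux ht).symm
    · exact (stronglyMeasurable_condExp.mul stronglyMeasurable_condExp).aestronglyMeasurable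
  have hh : StronglyMeasurable[m] fun ω => (μ[D|m]) ω / (1 - (μ[D|m]) ω) :=
    (stronglyMeasurable_condExp.measurable.div
      (measurable_const.sub stronglyMeasurable_condExp.measurable)).stronglyMeasurable
  have hf0int : Integrable (fun ω => (1 - D ω) * Y0 ω) μ :=
    hY0int.bdd_mul (c := 1) ((measurable_const.sub hD).aestronglyMeasurable :
        AEStronglyMeasurable (fun ω => 1 - D ω) μ)
      (Filter.Eventually.of_forall fun ω => by rcases hDbin ω with h | h <;> simp [h])
  have heq : (fun ω => (1 - D ω) * Y0 ω * π ω / (1 - π ω)) =ᵐ[μ]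
      fun ω => ((μ[D|m]) ω / (1 - (μ[D|m]) ω)) * ((1 - D ω) * Y0 ω) := by
    filter_upwards [hπ] with ω hω
    rw [hω]; ring
  have hintp : Integrable
      ((fun ω => (μ[D|m]) ω / (1 - (μ[D|m]) ω)) * fun ω => (1 - D ω) * Y0 ω) μ := by
    exact hint.congr heq
  have hpull1 : μ[(fun ω => (μ[D|m]) ω / (1 - (μ[D|m]) ω)) * fun ω => (1 - D ω) * Y0 ω|m]
      =ᵐ[μ] (fun ω => (μ[D|m]) ω / (1 - (μ[D|m]) ω)) * μ[fun ω => (1 - D ω) * Y0 ω|m] :=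
    condExp_mul_of_stronglyMeasurable_left hh hintp hf0int
  have hf0sub : (fun ω => (1 - D ω) * Y0 ω) = Y0 - fun ω => D ω * Y0 ω := by
    funext ω; simp only [Pi.sub_apply]; ring
  have hcsub : μ[fun ω => (1 - D ω) * Y0 ω|m]
      =ᵐ[μ] μ[Y0|m] - μ[fun ω => D ω * Y0 ω|m] := by
    rw [hf0sub]; exact condExp_sub hY0int hDY0int m
  have big : μ[(fun ω => (μ[D|m]) ω / (1 - (μ[D|m]) ω)) * fun ω => (1 - D ω) * Y0 ω|m]
      =ᵐ[μ] fun ω => (μ[D|m]) ω * (μ[Y0|m]) ω := by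
    filter_upwards [hpull1, hcsub, hkey, hp01] with ω h1 h2 h3 h4
    rw [h1]
    simp only [Pi.mul_apply, Pi.sub_apply] at h2 ⊢
    rw [h2, ← h3]
    have hne : (1 : ℝ) - (μ[D|m]) ω ≠ 0 := by
      have := h4.2; intro hc; linarith [hc]
    field_simp
  calc ∫ ω, (1 - D ω) * Y0 ω * π ω / (1 - π ω) ∂μ
      = ∫ ω, ((fun ω => (μ[D|m]) ω / (1 - (μ[D|m]) ω)) * fun ω => (1 - D ω) * Y0 ω) ω ∂μ := by
        refine integral_congr_ae ?_
        filter_upwards [heq] with ω hω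
        rw [hω]; rfl
    _ = ∫ ω, (μ[(fun ω => (μ[D|m]) ω / (1 - (μ[D|m]) ω)) * fun ω => (1 - D ω) * Y0 ω|m]) ω ∂μ :=
        (integral_condExp hm).symm
    _ = ∫ ω, (μ[D|m]) ω * (μ[Y0|m]) ω ∂μ := integral_congr_ae big
    _ = ∫ ω, (μ[(μ[D|m]) * Y0|m]) ω ∂μ := by
        refine integral_congr_ae ?_
        filter_upwards [hpull2] with ω hω
        rw [hω]; rfl
    _ = ∫ ω, ((μ[D|m]) * Y0) ω ∂μ := integral_condExp hm
    _ = ∫ ω, π ω * Y0 ω ∂μ := by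
        refine integral_congr_ae ?_
        filter_upwards [hπ] with ω hω
        simp only [Pi.mul_apply]
        rw [hω]

end Aux

/-- `E[D·Y(1)] = P(D=1)·E[Y(1)|D=1]`, and under `Y(0) ⫫ D | X`,
`E[(1-D)·Y(0)·π(X)/(1-π(X))] = E[π(X)·Y(0)] = P(D=1)·E[Y(0)|D=1]`. -/
theorem att_weighting_identities
    {Ω 𝒳 : Type*} [MeasurableSpace Ω] [StandardBorelSpace Ω] [MeasurableSpace 𝒳]
    (μ : Measure Ω) [IsProbabilityMeasure μ]
    (D : Ω → ℝ) (X : Ω → 𝒳) (Y0 Y1 : Ω → ℝ)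
    (hD : Measurable D) (hX : Measurable X)
    (hY0 : Measurable Y0) (hY1 : Measurable Y1)
    (hDbin : ∀ ω, D ω = 0 ∨ D ω = 1)
    (hpos : 0 < μ {ω | D ω = 1})
    (hY0int : Integrable Y0 μ) (hY1int : Integrable Y1 μ)
    (π : Ω → ℝ) (hπ : π =ᵐ[μ] μ[D | MeasurableSpace.comap X inferInstance])
    (hoverlap : ∀ᵐ ω ∂μ, 0 < π ω ∧ π ω < 1)
    (hunconf : CondIndepFun (MeasurableSpace.comap X inferInstance) hX.comap_le Y0 D μ)
    (hint : Integrable (fun ω => (1 - D ω) * Y0 ω * π ω / (1 - π ω)) μ) :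
    (∫ ω, D ω * Y1 ω ∂μ
        = (μ {ω | D ω = 1}).toReal * ∫ ω, Y1 ω ∂μ[|{ω | D ω = 1}])
    ∧ (∫ ω, (1 - D ω) * Y0 ω * π ω / (1 - π ω) ∂μ = ∫ ω, π ω * Y0 ω ∂μ)
    ∧ (∫ ω, π ω * Y0 ω ∂μ
        = (μ {ω | D ω = 1}).toReal * ∫ ω, Y0 ω ∂μ[|{ω | D ω = 1}]) := by
  have hA : MeasurableSet {ω | D ω = 1} := hD (measurableSet_singleton 1)
  have hA0 : μ {ω | D ω = 1} ≠ 0 := hpos.ne'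
  have hDind : ∀ Y : Ω → ℝ, (fun ω => D ω * Y ω) = Set.indicator {ω | D ω = 1} Y := by
    intro Y; funext ω
    rcases hDbin ω with h | h
    · have hnm : ω ∉ {ω | D ω = 1} := by simp [Set.mem_setOf_eq, h]
      simp [Set.indicator_apply, hnm, h]
    · have hmem : ω ∈ {ω | D ω = 1} := h
      simp [Set.indicator_apply, hmem, h]
  have hDint : ∀ Y : Ω → ℝ, ∫ ω, D ω * Y ω ∂μ
      = (μ {ω | D ω = 1}).toReal * ∫ ω, Y ω ∂μ[|{ω | D ω = 1}] := by
    intro Y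
    rw [hDind Y, integral_indicator hA, att_cond_integral μ hA0]
  obtain ⟨part2, part3⟩ := att_parts23 μ hX.comap_le hD hY0 hDbin hY0int hπ hoverlap hunconf hint
  exact ⟨hDint Y1, part2, part3.trans (hDint Y0)⟩
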